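/- Let ρ be a density operator on H_A ⊗ H_B, let M₀ = {M₀^a} and M₁ = {M₁^a} be two measurements on H_A with the same outcome set (collections of operators with Σ_a (M_i^a)† M_i^a = I), and let ρ_i = Σ_a |a⟩⟨a| ⊗ (M_i^a ρ (M_i^a)†) for i = 0,1 be the corresponding classical-quantum post-measurement states. Then the trace distance satisfies D(ρ₀, ρ₁) ≤ d_ρ(M₀, M₁), where d_ρ(M₀,M₁) = [Σ_a ‖M₀^a − M₁^a‖_ρ²]^{1/2} = [2 − 2 Re Σ_a tr((M₀^a)† M₁^a ρ)]^{1/2}. -/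

import Mathlib

open Matrix
open scoped ComplexOrder Kronecker

section Stmt7Aux

variable {m n p α : Type*} [Fintype m] [Fintype n] [Fintype p] [Fintype α] [DecidableEq α]

set_option linter.unusedSectionVars false

/-- squared Frobenius norm -/
noncomputable def fsq (M : Matrix m n ℂ) : ℝ := ∑ i, ∑ j, ‖M i j‖ ^ 2

lemma fsq_nonneg (M : Matrix m n ℂ) : 0 ≤ fsq M := by
  apply Finset.sum_nonneg; intro i _; apply Finset.sum_nonneg; intro j _; positivity

lemma trace_conjTranspose_mul_self (M : Matrix m n ℂ) : (Mᴴ * M).trace = (fsq M : ℂ) := by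
  unfold fsq
  push_cast
  rw [Finset.sum_comm]
  simp only [Matrix.trace, Matrix.diag, Matrix.mul_apply, conjTranspose_apply]
  congr 1; ext j; congr 1; ext i
  rw [Complex.star_def, ← Complex.normSq_eq_conj_mul_self, Complex.normSq_eq_norm_sq]
  push_cast; ring

/-- Frobenius Cauchy–Schwarz -/
lemma frobCS (X Y : Matrix m n ℂ) :
    ((Xᴴ * Y).trace).re ≤ Real.sqrt (fsq X) * Real.sqrt (fsq Y) := by
  have h1 : ((Xᴴ * Y).trace).re ≤ ∑ p : m × n, ‖X p.1 p.2‖ * ‖Y p.1 p.2‖ := by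
    have : (Xᴴ * Y).trace = ∑ j, ∑ i, (starRingEnd ℂ) (X i j) * Y i j := by
      simp [Matrix.trace, Matrix.mul_apply, Matrix.diag, conjTranspose_apply]
    rw [this]
    rw [Fintype.sum_prod_type]
    rw [Complex.re_sum]
    rw [Finset.sum_comm]
    apply Finset.sum_le_sum; intro j _
    rw [Complex.re_sum]
    apply Finset.sum_le_sum; intro i _
    calc ((starRingEnd ℂ) (X i j) * Y i j).re ≤ ‖(starRingEnd ℂ) (X i j) * Y i j‖ :=
          Complex.re_le_norm _
      _ = ‖X i j‖ * ‖Y i j‖ := by rw [norm_mul, Complex.norm_conj]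
  refine h1.trans ?_
  rw [← Real.sqrt_mul (fsq_nonneg X)]
  rw [show fsq X * fsq Y = (∑ p : m × n, ‖X p.1 p.2‖ ^ 2) * ∑ p : m × n, ‖Y p.1 p.2‖ ^ 2 by
    unfold fsq; rw [Fintype.sum_prod_type, Fintype.sum_prod_type]]
  rw [show (∑ p : m × n, ‖X p.1 p.2‖ * ‖Y p.1 p.2‖) = Real.sqrt ((∑ p : m × n, ‖X p.1 p.2‖ * ‖Y p.1 p.2‖)^2) from
    (Real.sqrt_sq (by positivity)).symm]
  exact Real.sqrt_le_sqrt (Finset.sum_mul_sq_le_sq_mul_sq _ _ _)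

/-- if `1 - Wᴴ W` is PSD then `W` is an ℓ²-contraction. -/
lemma ctr_of_psd {W : Matrix m m ℂ} [DecidableEq m] (h : (1 - Wᴴ * W).PosSemidef) :
    ∀ u : m → ℂ, ∑ i, ‖(W *ᵥ u) i‖ ^ 2 ≤ ∑ i, ‖u i‖ ^ 2 := by
  intro u
  have h0 := h.dotProduct_mulVec_nonneg u
  have e1 : star u ⬝ᵥ ((1 - Wᴴ * W) *ᵥ u) =
      ((∑ i, ‖u i‖ ^ 2 : ℝ) : ℂ) - ((∑ i, ‖(W *ᵥ u) i‖ ^ 2 : ℝ) : ℂ) := by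
    rw [sub_mulVec, dotProduct_sub, one_mulVec, ← mulVec_mulVec, dotProduct_mulVec,
      ← star_mulVec]
    congr 1
    · simp only [dotProduct]
      push_cast
      congr 1; ext i
      simp only [Pi.star_apply, Complex.star_def]
      rw [← Complex.normSq_eq_conj_mul_self, Complex.normSq_eq_norm_sq]
      push_cast; ring
    · simp only [dotProduct]
      push_cast
      congr 1; ext i
      simp only [Pi.star_apply, Complex.star_def]
      rw [← Complex.normSq_eq_conj_mul_self, Complex.normSq_eq_norm_sq]
      push_cast; ring
  rw [e1] at h0
  rw [← Complex.ofReal_sub, Complex.zero_le_real] at h0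
  linarith

lemma fsq_mul_le {W : Matrix m m ℂ}
    (hW : ∀ u : m → ℂ, ∑ i, ‖(W *ᵥ u) i‖ ^ 2 ≤ ∑ i, ‖u i‖ ^ 2)
    (A : Matrix m n ℂ) : fsq (W * A) ≤ fsq A := by
  unfold fsq
  rw [Finset.sum_comm, Finset.sum_comm (f := fun i j => ‖A i j‖ ^ 2)]
  apply Finset.sum_le_sum
  intro j _
  have := hW (fun k => A k j)
  simpa [Matrix.mul_apply, Matrix.mulVec, dotProduct] using this

lemma ctr_block {W : Matrix (α × m) (α × m) ℂ}
    (hW : ∀ u : α × m → ℂ, ∑ i, ‖(W *ᵥ u) i‖ ^ 2 ≤ ∑ i, ‖u i‖ ^ 2) (a : α) :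
    ∀ v : m → ℂ, ∑ x, ‖((Matrix.of fun x y => W (a, x) (a, y)) *ᵥ v) x‖ ^ 2
      ≤ ∑ x, ‖v x‖ ^ 2 := by
  intro v
  classical
  set u : α × m → ℂ := fun q => if q.1 = a then v q.2 else 0 with hu
  have key : ∀ x, ((Matrix.of fun x y => W (a, x) (a, y)) *ᵥ v) x = (W *ᵥ u) (a, x) := by
    intro x
    simp only [Matrix.mulVec, dotProduct, Matrix.of_apply, hu]
    rw [Fintype.sum_prod_type, Finset.sum_comm]
    simp only [mul_ite, mul_zero]
    rw [Finset.sum_comm]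
    simp
  have h1 : ∀ b, ∑ x, ‖(if b = a then v x else 0 : ℂ)‖ ^ 2
      = if b = a then ∑ x, ‖v x‖ ^ 2 else 0 := by
    intro b; split_ifs <;> simp
  calc ∑ x, ‖((Matrix.of fun x y => W (a, x) (a, y)) *ᵥ v) x‖ ^ 2
      = ∑ x, ‖(W *ᵥ u) (a, x)‖ ^ 2 := by simp only [key]
    _ ≤ ∑ q : α × m, ‖(W *ᵥ u) q‖ ^ 2 := by
        rw [Fintype.sum_prod_type]
        exact Finset.single_le_sum (f := fun b => ∑ x, ‖(W *ᵥ u) (b, x)‖ ^ 2)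
          (fun b _ => Finset.sum_nonneg fun x _ => by positivity) (Finset.mem_univ a)
    _ ≤ ∑ q : α × m, ‖u q‖ ^ 2 := hW u
    _ = ∑ x, ‖v x‖ ^ 2 := by
        rw [Fintype.sum_prod_type]
        simp only [hu, h1]
        simp

lemma kron_conjT (A : Matrix m m ℂ) (B : Matrix n n ℂ) : (A ⊗ₖ B)ᴴ = Aᴴ ⊗ₖ Bᴴ := by
  ext ⟨i, j⟩ ⟨k, l⟩
  simp [conjTranspose_apply, Matrix.kroneckerMap_apply, mul_comm]

lemma sum_kron (A : α → Matrix m m ℂ) (B : Matrix n n ℂ) :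
    (∑ a, A a) ⊗ₖ B = ∑ a, A a ⊗ₖ B := by
  ext ⟨i, j⟩ ⟨k, l⟩
  simp [Matrix.kroneckerMap_apply, Finset.sum_mul, Matrix.sum_apply]

lemma sign_mul_self' (r : ℝ) : Real.sign r * r = |r| := by
  rcases lt_trichotomy r 0 with h | h | h
  · rw [Real.sign_of_neg h, abs_of_neg h]; ring
  · simp [h]
  · rw [Real.sign_of_pos h, abs_of_pos h]; ring

lemma sign_sq_le_one' (r : ℝ) : Real.sign r ^ 2 ≤ 1 := by
  rcases Real.sign_apply_eq r with h | h | h <;> rw [h] <;> norm_num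

lemma UDU_mul {U : Matrix m m ℂ} [DecidableEq m] (hU : star U * U = 1) (d e : m → ℂ) :
    (U * diagonal d * star U) * (U * diagonal e * star U)
      = U * diagonal (fun i => d i * e i) * star U := by
  have : (U * diagonal d * star U) * (U * diagonal e * star U)
      = U * (diagonal d * (star U * U) * diagonal e) * star U := by
    simp only [Matrix.mul_assoc]
  rw [this, hU, Matrix.mul_one, diagonal_mul_diagonal]

lemma UDU_conjT {U : Matrix m m ℂ} [DecidableEq m] (d : m → ℝ) :
    (U * diagonal (fun i => (d i : ℂ)) * star U)ᴴ
      = U * diagonal (fun i => (d i : ℂ)) * star U := by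
  have hd : star (fun i => (d i : ℂ)) = fun i => (d i : ℂ) := by
    funext i; simp [Pi.star_apply, Complex.star_def]
  rw [star_eq_conjTranspose, conjTranspose_mul, conjTranspose_mul, conjTranspose_conjTranspose,
    diagonal_conjTranspose, hd, Matrix.mul_assoc]

lemma fsq_sub_eq (P Q : Matrix m n ℂ) :
    fsq (P - Q) = fsq P + fsq Q - 2 * ((Pᴴ * Q).trace).re := by
  have h : ((P - Q)ᴴ * (P - Q)).trace
      = (Pᴴ * P).trace + (Qᴴ * Q).trace - (Pᴴ * Q).trace - (Qᴴ * P).trace := by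
    rw [conjTranspose_sub, Matrix.sub_mul, Matrix.mul_sub, Matrix.mul_sub, Matrix.trace_sub,
      Matrix.trace_sub, Matrix.trace_sub]
    ring
  have h2 : ((Qᴴ * P).trace).re = ((Pᴴ * Q).trace).re := by
    rw [show Qᴴ * P = (Pᴴ * Q)ᴴ by rw [conjTranspose_mul, conjTranspose_conjTranspose],
      Matrix.trace_conjTranspose]
    exact Complex.conj_re _
  have h3 := congrArg Complex.re h
  rw [trace_conjTranspose_mul_self, trace_conjTranspose_mul_self,
    trace_conjTranspose_mul_self] at h3
  simp only [Complex.sub_re, Complex.add_re, Complex.ofReal_re] at h3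
  rw [h3, h2]; ring

lemma fsq_neg_eq (Q : Matrix m n ℂ) : fsq (-Q) = fsq Q := by
  unfold fsq; simp

lemma fsq_add_eq (P Q : Matrix m n ℂ) :
    fsq (P + Q) = fsq P + fsq Q + 2 * ((Pᴴ * Q).trace).re := by
  have := fsq_sub_eq P (-Q)
  simp only [sub_neg_eq_add, Matrix.mul_neg, Matrix.trace_neg, Complex.neg_re] at this
  rw [this, fsq_neg_eq]
  ring

end Stmt7Aux

theorem stmt_7 {nA nB : ℕ} {α : Type*} [Fintype α] [DecidableEq α]
    (ρ : Matrix (Fin nA × Fin nB) (Fin nA × Fin nB) ℂ)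
    (hρ : ρ.PosSemidef) (hρtr : ρ.trace = 1)
    (M₀ M₁ : α → Matrix (Fin nA) (Fin nA) ℂ)
    (hM₀ : ∑ a, (M₀ a)ᴴ * M₀ a = 1) (hM₁ : ∑ a, (M₁ a)ᴴ * M₁ a = 1)
    -- the two classical–quantum post-measurement states
    (σ₀ σ₁ : Matrix (α × (Fin nA × Fin nB)) (α × (Fin nA × Fin nB)) ℂ)
    (hσ₀ : ∀ a b x y, σ₀ (a, x) (b, y) =
      if a = b then (((M₀ a ⊗ₖ (1 : Matrix (Fin nB) (Fin nB) ℂ)) * ρ * (M₀ a ⊗ₖ (1 : Matrix (Fin nB) (Fin nB) ℂ))ᴴ) x y) else 0)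
    (hσ₁ : ∀ a b x y, σ₁ (a, x) (b, y) =
      if a = b then (((M₁ a ⊗ₖ (1 : Matrix (Fin nB) (Fin nB) ℂ)) * ρ * (M₁ a ⊗ₖ (1 : Matrix (Fin nB) (Fin nB) ℂ))ᴴ) x y) else 0)
    -- `Dm` is the operator absolute value `|σ₀ − σ₁|`
    (Dm : Matrix (α × (Fin nA × Fin nB)) (α × (Fin nA × Fin nB)) ℂ)
    (hDm : Dm.PosSemidef) (hDm2 : Dm * Dm = (σ₀ - σ₁)ᴴ * (σ₀ - σ₁)) :
    -- trace distance ≤ d_ρ(M₀, M₁)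
    (1 / 2 : ℝ) * (Dm.trace).re ≤
      Real.sqrt (2 - 2 * (∑ a, ((((M₀ a)ᴴ * M₁ a) ⊗ₖ (1 : Matrix (Fin nB) (Fin nB) ℂ))
        * ρ).trace).re) := by
  classical
  set E₀ : α → Matrix (Fin nA × Fin nB) (Fin nA × Fin nB) ℂ :=
    fun a => M₀ a ⊗ₖ (1 : Matrix (Fin nB) (Fin nB) ℂ) with hE₀def
  set E₁ : α → Matrix (Fin nA × Fin nB) (Fin nA × Fin nB) ℂ :=
    fun a => M₁ a ⊗ₖ (1 : Matrix (Fin nB) (Fin nB) ℂ) with hE₁def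
  open MatrixOrder in
  set S : Matrix (Fin nA × Fin nB) (Fin nA × Fin nB) ℂ := CFC.sqrt ρ with hSdef
  have hSH : Sᴴ = S := by open MatrixOrder in exact (CFC.sqrt_nonneg ρ).posSemidef.1
  have hS2 : S * S = ρ := by open MatrixOrder in exact CFC.sqrt_mul_sqrt_self ρ hρ.nonneg
  set P : α → Matrix (Fin nA × Fin nB) (Fin nA × Fin nB) ℂ := fun a => E₀ a * S with hPdef
  set Q : α → Matrix (Fin nA × Fin nB) (Fin nA × Fin nB) ℂ := fun a => E₁ a * S with hQdef
  set X : α → Matrix (Fin nA × Fin nB) (Fin nA × Fin nB) ℂ :=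
    fun a => E₀ a * ρ * (E₀ a)ᴴ - E₁ a * ρ * (E₁ a)ᴴ with hXdef
  set s : ℝ := (∑ a, ((((M₀ a)ᴴ * M₁ a) ⊗ₖ (1 : Matrix (Fin nB) (Fin nB) ℂ)) * ρ).trace).re
    with hsdef
  -- sums of conjugate squares
  have hE₀sum : ∑ a, (E₀ a)ᴴ * E₀ a = 1 := by
    have : ∀ a, (E₀ a)ᴴ * E₀ a = ((M₀ a)ᴴ * M₀ a) ⊗ₖ (1 : Matrix (Fin nB) (Fin nB) ℂ) := by
      intro a
      simp only [hE₀def]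
      rw [kron_conjT, ← Matrix.mul_kronecker_mul, conjTranspose_one, Matrix.one_mul]
    rw [Finset.sum_congr rfl fun a _ => this a, ← sum_kron, hM₀, Matrix.one_kronecker_one]
  have hE₁sum : ∑ a, (E₁ a)ᴴ * E₁ a = 1 := by
    have : ∀ a, (E₁ a)ᴴ * E₁ a = ((M₁ a)ᴴ * M₁ a) ⊗ₖ (1 : Matrix (Fin nB) (Fin nB) ℂ) := by
      intro a
      simp only [hE₁def]
      rw [kron_conjT, ← Matrix.mul_kronecker_mul, conjTranspose_one, Matrix.one_mul]
    rw [Finset.sum_congr rfl fun a _ => this a, ← sum_kron, hM₁, Matrix.one_kronecker_one]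
  have hPsum : ∑ a, (P a)ᴴ * P a = ρ := by
    have : ∀ a, (P a)ᴴ * P a = S * ((E₀ a)ᴴ * E₀ a) * S := by
      intro a
      simp only [hPdef]
      rw [conjTranspose_mul, hSH]
      noncomm_ring
    rw [Finset.sum_congr rfl fun a _ => this a, ← Finset.sum_mul, ← Finset.mul_sum, hE₀sum,
      Matrix.mul_one, hS2]
  have hQsum : ∑ a, (Q a)ᴴ * Q a = ρ := by
    have : ∀ a, (Q a)ᴴ * Q a = S * ((E₁ a)ᴴ * E₁ a) * S := by
      intro a
      simp only [hQdef]
      rw [conjTranspose_mul, hSH]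
      noncomm_ring
    rw [Finset.sum_congr rfl fun a _ => this a, ← Finset.sum_mul, ← Finset.mul_sum, hE₁sum,
      Matrix.mul_one, hS2]
  have hfP : ∑ a, fsq (P a) = 1 := by
    have h1 : ((∑ a, (P a)ᴴ * P a).trace).re = 1 := by rw [hPsum, hρtr]; simp
    rw [Matrix.trace_sum, Complex.re_sum] at h1
    rw [← h1]
    apply Finset.sum_congr rfl
    intro a _
    rw [trace_conjTranspose_mul_self, Complex.ofReal_re]
  have hfQ : ∑ a, fsq (Q a) = 1 := by
    have h1 : ((∑ a, (Q a)ᴴ * Q a).trace).re = 1 := by rw [hQsum, hρtr]; simp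
    rw [Matrix.trace_sum, Complex.re_sum] at h1
    rw [← h1]
    apply Finset.sum_congr rfl
    intro a _
    rw [trace_conjTranspose_mul_self, Complex.ofReal_re]
  have hPQ : ∑ a, (((P a)ᴴ * Q a).trace).re = s := by
    rw [hsdef, Complex.re_sum]
    apply Finset.sum_congr rfl
    intro a _
    congr 1
    have e1 : ((M₀ a)ᴴ * M₁ a) ⊗ₖ (1 : Matrix (Fin nB) (Fin nB) ℂ) = (E₀ a)ᴴ * E₁ a := by
      rw [hE₀def, hE₁def, kron_conjT, ← Matrix.mul_kronecker_mul, conjTranspose_one,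
        Matrix.one_mul]
    simp only [hPdef, hQdef]
    rw [e1, conjTranspose_mul, hSH]
    calc (S * (E₀ a)ᴴ * (E₁ a * S)).trace = ((E₀ a)ᴴ * (E₁ a * S) * S).trace := by
          rw [Matrix.mul_assoc, Matrix.trace_mul_comm]
      _ = ((E₀ a)ᴴ * E₁ a * ρ).trace := by rw [← hS2]; noncomm_ring
  -- sums of squared Frobenius norms of P ± Q
  have hfsub : ∑ a, fsq (P a - Q a) = 2 - 2 * s := by
    rw [Finset.sum_congr rfl fun a _ => fsq_sub_eq (P a) (Q a)]
    rw [Finset.sum_sub_distrib, Finset.sum_add_distrib, hfP, hfQ, ← Finset.mul_sum, hPQ]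
    ring
  have hfadd : ∑ a, fsq (P a + Q a) = 2 + 2 * s := by
    rw [Finset.sum_congr rfl fun a _ => fsq_add_eq (P a) (Q a)]
    rw [Finset.sum_add_distrib, Finset.sum_add_distrib, hfP, hfQ, ← Finset.mul_sum, hPQ]
    ring
  have hs1 : s ≤ 1 := by
    have h0 : (0 : ℝ) ≤ ∑ a, fsq (P a - Q a) :=
      Finset.sum_nonneg fun a _ => fsq_nonneg _
    rw [hfsub] at h0; linarith
  -- Hermiticity of σ₀, σ₁
  have hblockH₀ : ∀ a, (E₀ a * ρ * (E₀ a)ᴴ).IsHermitian :=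
    fun a => Matrix.isHermitian_mul_mul_conjTranspose _ hρ.1
  have hblockH₁ : ∀ a, (E₁ a * ρ * (E₁ a)ᴴ).IsHermitian :=
    fun a => Matrix.isHermitian_mul_mul_conjTranspose _ hρ.1
  have hσ₀H : σ₀.IsHermitian := by
    show σ₀ᴴ = σ₀
    ext ⟨a, x⟩ ⟨b, y⟩
    rw [conjTranspose_apply, hσ₀, hσ₀]
    by_cases hab : a = b
    · subst hab
      simp only [if_pos rfl]
      have := congrFun (congrFun (hblockH₀ a) x) y
      rw [conjTranspose_apply] at this
      exact this
    · simp [hab, Ne.symm hab]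
  have hσ₁H : σ₁.IsHermitian := by
    show σ₁ᴴ = σ₁
    ext ⟨a, x⟩ ⟨b, y⟩
    rw [conjTranspose_apply, hσ₁, hσ₁]
    by_cases hab : a = b
    · subst hab
      simp only [if_pos rfl]
      have := congrFun (congrFun (hblockH₁ a) x) y
      rw [conjTranspose_apply] at this
      exact this
    · simp [hab, Ne.symm hab]
  have hΔH : (σ₀ - σ₁).IsHermitian := hσ₀H.sub hσ₁H
  -- spectral decomposition machinery
  set U : Matrix (α × (Fin nA × Fin nB)) (α × (Fin nA × Fin nB)) ℂ :=
    (hΔH.eigenvectorUnitary : Matrix (α × (Fin nA × Fin nB)) (α × (Fin nA × Fin nB)) ℂ)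
    with hUdef
  have hU1 : star U * U = 1 := Matrix.mem_unitaryGroup_iff'.mp hΔH.eigenvectorUnitary.2
  have hU2 : U * star U = 1 := Matrix.mem_unitaryGroup_iff.mp hΔH.eigenvectorUnitary.2
  set ev : α × (Fin nA × Fin nB) → ℝ := hΔH.eigenvalues with hevdef
  have hspec : σ₀ - σ₁ = U * diagonal (fun i => (ev i : ℂ)) * star U := by
    have := hΔH.spectral_theorem
    rw [this, Unitary.conjStarAlgAut_apply]; rfl
  set W : Matrix (α × (Fin nA × Fin nB)) (α × (Fin nA × Fin nB)) ℂ :=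
    U * diagonal (fun i => (Real.sign (ev i) : ℂ)) * star U with hWdef
  set Dabs : Matrix (α × (Fin nA × Fin nB)) (α × (Fin nA × Fin nB)) ℂ :=
    U * diagonal (fun i => ((|ev i| : ℝ) : ℂ)) * star U with hDabsdef
  have hDabsPSD : Dabs.PosSemidef := by
    rw [hDabsdef, star_eq_conjTranspose]
    exact (Matrix.posSemidef_diagonal_iff.mpr fun i =>
      Complex.zero_le_real.mpr (abs_nonneg _)).mul_mul_conjTranspose_same U
  have hDmDabs : Dm = Dabs := by
    open MatrixOrder in apply (CFC.sq_eq_sq_iff Dm Dabs hDm.nonneg hDabsPSD.nonneg).mp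
    rw [pow_two, pow_two, hDm2, hΔH.eq, hspec, hDabsdef, UDU_mul hU1, UDU_mul hU1]
    have hd : (fun i => (ev i : ℂ) * (ev i : ℂ))
        = fun i => ((|ev i| : ℝ) : ℂ) * ((|ev i| : ℝ) : ℂ) := by
      funext i; rw [← Complex.ofReal_mul, ← Complex.ofReal_mul, abs_mul_abs_self]
    rw [hd]
  have hWΔ : W * (σ₀ - σ₁) = Dm := by
    rw [hWdef, hspec, UDU_mul hU1, hDmDabs, hDabsdef]
    have hd : (fun i => (Real.sign (ev i) : ℂ) * (ev i : ℂ))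
        = fun i => ((|ev i| : ℝ) : ℂ) := by
      funext i; rw [← Complex.ofReal_mul, sign_mul_self' (ev i)]
    rw [hd]
  -- W is a contraction
  have hWH : Wᴴ = W := UDU_conjT (fun i => Real.sign (ev i))
  have hWctr : ∀ u, ∑ i, ‖(W *ᵥ u) i‖ ^ 2 ≤ ∑ i, ‖u i‖ ^ 2 := by
    apply ctr_of_psd
    have hone : (1 : Matrix (α × (Fin nA × Fin nB)) (α × (Fin nA × Fin nB)) ℂ)
        = U * diagonal (fun _ => (1 : ℂ)) * star U := by
      rw [diagonal_one, Matrix.mul_one, hU2]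
    have : (1 : Matrix (α × (Fin nA × Fin nB)) (α × (Fin nA × Fin nB)) ℂ) - Wᴴ * W
        = U * diagonal (fun i => 1 - (Real.sign (ev i) : ℂ) * (Real.sign (ev i) : ℂ))
          * star U := by
      rw [hWH, hWdef, UDU_mul hU1, hone]
      rw [← Matrix.sub_mul, ← Matrix.mul_sub, diagonal_sub]
    rw [this, star_eq_conjTranspose]
    apply Matrix.PosSemidef.mul_mul_conjTranspose_same
    apply Matrix.posSemidef_diagonal_iff.mpr
    intro i
    have h1 : (1 : ℂ) - (Real.sign (ev i) : ℂ) * (Real.sign (ev i) : ℂ)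
        = ((1 - Real.sign (ev i) * Real.sign (ev i) : ℝ) : ℂ) := by push_cast; ring
    rw [h1, Complex.zero_le_real]
    have := sign_sq_le_one' (ev i)
    nlinarith
  -- block structure of the trace
  have hΔent : ∀ (b a : α) (y x : Fin nA × Fin nB),
      (σ₀ - σ₁) (b, y) (a, x) = if b = a then X b y x else 0 := by
    intro b a y x
    rw [Matrix.sub_apply, hσ₀, hσ₁]
    simp only [hXdef]
    split_ifs with h
    · rw [Matrix.sub_apply]
    · simp
  have hblocktr : (W * (σ₀ - σ₁)).trace
      = ∑ a, ((Matrix.of fun x y => W (a, x) (a, y)) * X a).trace := by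
    simp only [Matrix.trace, Matrix.diag, Matrix.mul_apply, Matrix.of_apply]
    rw [Fintype.sum_prod_type]
    apply Finset.sum_congr rfl
    intro a _
    apply Finset.sum_congr rfl
    intro x _
    rw [Fintype.sum_prod_type]
    simp only [hΔent, mul_ite, mul_zero]
    rw [Finset.sum_comm]
    simp
  -- per-block bound
  have hVbound : ∀ a, (((Matrix.of fun x y => W (a, x) (a, y)) * X a).trace).re
      ≤ Real.sqrt (fsq (P a - Q a)) * Real.sqrt (fsq (P a + Q a)) := by
    intro a
    set V : Matrix (Fin nA × Fin nB) (Fin nA × Fin nB) ℂ :=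
      Matrix.of fun x y => W (a, x) (a, y) with hVdef
    have hVctr := ctr_block hWctr a
    set Aa : Matrix (Fin nA × Fin nB) (Fin nA × Fin nB) ℂ := P a - Q a with hAadef
    set Ba : Matrix (Fin nA × Fin nB) (Fin nA × Fin nB) ℂ := P a + Q a with hBadef
    have hXa : X a = P a * (P a)ᴴ - Q a * (Q a)ᴴ := by
      simp only [hXdef, hPdef, hQdef]
      rw [conjTranspose_mul, conjTranspose_mul, hSH, ← hS2]
      noncomm_ring
    have hX2 : X a + X a = Aa * Baᴴ + Ba * Aaᴴ := by
      rw [hXa, hAadef, hBadef, conjTranspose_add, conjTranspose_sub]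
      noncomm_ring
    have hfA : Real.sqrt (fsq (V * Aa)) ≤ Real.sqrt (fsq Aa) :=
      Real.sqrt_le_sqrt (fsq_mul_le hVctr Aa)
    have hfB : Real.sqrt (fsq (V * Ba)) ≤ Real.sqrt (fsq Ba) :=
      Real.sqrt_le_sqrt (fsq_mul_le hVctr Ba)
    have ht1 : ((V * (Aa * Baᴴ)).trace).re ≤ Real.sqrt (fsq Aa) * Real.sqrt (fsq Ba) := by
      have e : (V * (Aa * Baᴴ)).trace = (Baᴴ * (V * Aa)).trace := by
        rw [← Matrix.mul_assoc, Matrix.trace_mul_comm]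
      rw [e]
      calc ((Baᴴ * (V * Aa)).trace).re ≤ Real.sqrt (fsq Ba) * Real.sqrt (fsq (V * Aa)) :=
            frobCS Ba (V * Aa)
        _ ≤ Real.sqrt (fsq Ba) * Real.sqrt (fsq Aa) :=
            mul_le_mul_of_nonneg_left hfA (Real.sqrt_nonneg _)
        _ = Real.sqrt (fsq Aa) * Real.sqrt (fsq Ba) := mul_comm _ _
    have ht2 : ((V * (Ba * Aaᴴ)).trace).re ≤ Real.sqrt (fsq Aa) * Real.sqrt (fsq Ba) := by
      have e : (V * (Ba * Aaᴴ)).trace = (Aaᴴ * (V * Ba)).trace := by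
        rw [← Matrix.mul_assoc, Matrix.trace_mul_comm]
      rw [e]
      calc ((Aaᴴ * (V * Ba)).trace).re ≤ Real.sqrt (fsq Aa) * Real.sqrt (fsq (V * Ba)) :=
            frobCS Aa (V * Ba)
        _ ≤ Real.sqrt (fsq Aa) * Real.sqrt (fsq Ba) :=
            mul_le_mul_of_nonneg_left hfB (Real.sqrt_nonneg _)
    have hcomb : ((V * X a).trace).re + ((V * X a).trace).re
        = ((V * (Aa * Baᴴ)).trace).re + ((V * (Ba * Aaᴴ)).trace).re := by
      have e : (V * X a).trace + (V * X a).trace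
          = (V * (Aa * Baᴴ)).trace + (V * (Ba * Aaᴴ)).trace := by
        rw [← Matrix.trace_add, ← Matrix.trace_add, ← Matrix.mul_add, ← Matrix.mul_add, hX2]
      have := congrArg Complex.re e
      simpa [Complex.add_re] using this
    linarith [ht1, ht2, hcomb]
  -- assemble the pieces
  have hsum : ((W * (σ₀ - σ₁)).trace).re
      ≤ ∑ a, Real.sqrt (fsq (P a - Q a)) * Real.sqrt (fsq (P a + Q a)) := by
    rw [hblocktr, Complex.re_sum]
    exact Finset.sum_le_sum fun a _ => hVbound a
  have hCS : ∑ a, Real.sqrt (fsq (P a - Q a)) * Real.sqrt (fsq (P a + Q a))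
      ≤ Real.sqrt (2 - 2 * s) * Real.sqrt (2 + 2 * s) := by
    rw [← Real.sqrt_mul (by linarith)]
    rw [show (∑ a, Real.sqrt (fsq (P a - Q a)) * Real.sqrt (fsq (P a + Q a)))
        = Real.sqrt ((∑ a, Real.sqrt (fsq (P a - Q a)) * Real.sqrt (fsq (P a + Q a))) ^ 2) from
      (Real.sqrt_sq (Finset.sum_nonneg fun a _ =>
        mul_nonneg (Real.sqrt_nonneg _) (Real.sqrt_nonneg _))).symm]
    apply Real.sqrt_le_sqrt
    have hcs := Finset.sum_sq_le_sum_mul_sum_of_sq_eq_mul Finset.univ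
      (f := fun a => fsq (P a - Q a)) (g := fun a => fsq (P a + Q a))
      (r := fun a => Real.sqrt (fsq (P a - Q a)) * Real.sqrt (fsq (P a + Q a)))
      (fun a _ => fsq_nonneg _) (fun a _ => fsq_nonneg _)
      (fun a _ => by rw [mul_pow, Real.sq_sqrt (fsq_nonneg _), Real.sq_sqrt (fsq_nonneg _)])
    rw [hfsub, hfadd] at hcs
    exact hcs
  have htr : (Dm.trace).re ≤ Real.sqrt (2 - 2 * s) * Real.sqrt (2 + 2 * s) := by
    rw [← hWΔ]; exact hsum.trans hCS
  have hfin : Real.sqrt (2 + 2 * s) ≤ 2 := by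
    calc Real.sqrt (2 + 2 * s) ≤ Real.sqrt 4 := Real.sqrt_le_sqrt (by linarith)
      _ = 2 := by
          rw [show (4:ℝ) = 2 ^ 2 by norm_num, Real.sqrt_sq (by norm_num : (0:ℝ) ≤ 2)]
  calc (1/2 : ℝ) * (Dm.trace).re
      ≤ (1/2) * (Real.sqrt (2 - 2 * s) * Real.sqrt (2 + 2 * s)) := by linarith
    _ ≤ (1/2) * (Real.sqrt (2 - 2 * s) * 2) := by
        have := mul_le_mul_of_nonneg_left hfin (Real.sqrt_nonneg (2 - 2 * s))
        linarith
    _ = Real.sqrt (2 - 2 * s) := by ring
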